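/- Fix c ≥ 1 and take the jump set J = {−c, −c+1, …, −1, +1}. For n ≥ 0 and k ≥ 0 let q_{n,k} be the number of excursions with catastrophes (with jump set J) of length n containing exactly one catastrophe, occurring as the final step and having size k. Then q_{n,k} = 0 unless k ≥ c + 1 and n ≥ 2, and for every j ≥ 0 and n ≥ 2, q_{n, c+1+j} = Σ_{a+b = n−2} M^{(c)}_a · M_{b,j}, where M^{(c)}_a is the number of catastrophe-free meanders of length a ending at altitude c and M_{b,j} is the number of catastrophe-free meanders of length b ending at altitude j. -/

import Mathlib

/-- Validity of a path with catastrophes over the jump set `J`, starting from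
altitude `h`: each step is either a jump `s ∈ J` keeping the altitude
nonnegative, or a catastrophe `s = -h` from an altitude `h > 0` with `-h ∉ J`
(landing at altitude `0`). -/
def CatValidFrom (J : Finset ℤ) : ℤ → List ℤ → Prop
  | _, [] => True
  | h, s :: r =>
    ((s ∈ J ∧ 0 ≤ h + s) ∨ (s = -h ∧ 0 < h ∧ -h ∉ J)) ∧ CatValidFrom J (h + s) r

/-- Validity of a catastrophe-free meander over the jump set `J`, starting from
altitude `h`: every step belongs to `J` and all partial altitudes are
nonnegative. -/
def FreeFrom (J : Finset ℤ) : ℤ → List ℤ → Prop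
  | _, [] => True
  | h, s :: r => (s ∈ J ∧ 0 ≤ h + s) ∧ FreeFrom J (h + s) r

/-- The number of catastrophe steps of a path starting at altitude `h`. -/
def catNum (J : Finset ℤ) : ℤ → List ℤ → ℕ
  | _, [] => 0
  | h, s :: r => (if s = -h ∧ 0 < h ∧ -h ∉ J then 1 else 0) + catNum J (h + s) r

/-- The jump set `J = {-c, …, -1, +1}` of Łukasiewicz-like paths. -/
noncomputable def lukJ (c : ℕ) : Finset ℤ := insert 1 (Finset.Icc (-(c : ℤ)) (-1))

/-- `q n k` (for the jump set `lukJ c`): the number of excursions with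
catastrophes of length `n` containing exactly one catastrophe, occurring as the
final step and having size `k` (i.e. jumping from altitude `k` to `0`). -/
noncomputable def qCountSize (c : ℕ) (n : ℕ) (k : ℕ) : ℕ :=
  Nat.card {l : List ℤ //
    l.length = n ∧ CatValidFrom (lukJ c) 0 l ∧ l.sum = 0 ∧
      ∃ l' : List ℤ, l = l' ++ [-l'.sum] ∧ 0 < l'.sum ∧ -l'.sum ∉ lukJ c ∧
        catNum (lukJ c) 0 l' = 0 ∧ l'.sum = (k : ℤ)}

/-- The number of catastrophe-free meanders over `lukJ c` of length `n`
ending at altitude `k`. -/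
noncomputable def freeMCount (c : ℕ) (n : ℕ) (k : ℤ) : ℕ :=
  Nat.card {l : List ℤ // l.length = n ∧ FreeFrom (lukJ c) 0 l ∧ l.sum = k}

section QAux

def FloorFrom (J : Finset ℤ) (t : ℤ) : ℤ → List ℤ → Prop
  | _, [] => True
  | h, s :: r => (s ∈ J ∧ t ≤ h + s) ∧ FloorFrom J t (h + s) r

variable {J : Finset ℤ}

lemma free_append {l₁ l₂ : List ℤ} {h : ℤ} :
    FreeFrom J h (l₁ ++ l₂) ↔ FreeFrom J h l₁ ∧ FreeFrom J (h + l₁.sum) l₂ := by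
  induction l₁ generalizing h with
  | nil => simp [FreeFrom]
  | cons s r ih => simp [FreeFrom, ih, add_assoc, and_assoc]

lemma cat_append {l₁ l₂ : List ℤ} {h : ℤ} :
    CatValidFrom J h (l₁ ++ l₂) ↔ CatValidFrom J h l₁ ∧ CatValidFrom J (h + l₁.sum) l₂ := by
  induction l₁ generalizing h with
  | nil => simp [CatValidFrom]
  | cons s r ih => simp [CatValidFrom, ih, add_assoc, and_assoc]

lemma free_iff {h : ℤ} {l : List ℤ} :
    FreeFrom J h l ↔ CatValidFrom J h l ∧ catNum J h l = 0 := by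
  induction l generalizing h with
  | nil => simp [FreeFrom, CatValidFrom, catNum]
  | cons s r ih =>
    simp only [FreeFrom, CatValidFrom, catNum, ih]
    by_cases hcat : s = -h ∧ 0 < h ∧ -h ∉ J
    · simp only [if_pos hcat]
      constructor
      · rintro ⟨⟨hs, -⟩, -⟩
        exact absurd (hcat.1 ▸ hs) hcat.2.2
      · rintro ⟨-, hn⟩; omega
    · simp only [if_neg hcat, zero_add]
      tauto

lemma floor_shift {t h : ℤ} {l : List ℤ} :
    FloorFrom J t h l ↔ FreeFrom J (h - t) l := by
  induction l generalizing h with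
  | nil => simp [FloorFrom, FreeFrom]
  | cons s r ih =>
    simp only [FloorFrom, FreeFrom, ih]
    constructor
    · rintro ⟨⟨h1, h2⟩, h3⟩
      exact ⟨⟨h1, by omega⟩, by rw [sub_add_eq_add_sub]; exact h3⟩
    · rintro ⟨⟨h1, h2⟩, h3⟩
      exact ⟨⟨h1, by omega⟩, by rw [← sub_add_eq_add_sub]; exact h3⟩

lemma floor_take {t h : ℤ} {l : List ℤ} (ht : t ≤ h) (hf : FloorFrom J t h l) :
    ∀ i, t ≤ h + (l.take i).sum := by
  induction l generalizing h with
  | nil => intro i; simpa using ht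
  | cons s r ih =>
    intro i
    cases i with
    | zero => simpa using ht
    | succ i =>
      obtain ⟨⟨-, h2⟩, h3⟩ := hf
      have := ih h2 h3 i
      simp only [List.take_succ_cons, List.sum_cons]
      omega

lemma mem_of_free {h : ℤ} {l : List ℤ} (hf : FreeFrom J h l) : ∀ x ∈ l, x ∈ J := by
  induction l generalizing h with
  | nil => simp
  | cons s r ih =>
    obtain ⟨⟨h1, -⟩, h3⟩ := hf
    intro x hx
    rcases List.mem_cons.1 hx with rfl | hx
    · exact h1
    · exact ih h3 x hx

lemma free_mono {h h' : ℤ} {l : List ℤ} (hh : h ≤ h') (hf : FreeFrom J h l) :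
    FreeFrom J h' l := by
  induction l generalizing h h' with
  | nil => trivial
  | cons s r ih =>
    obtain ⟨⟨h1, h2⟩, h3⟩ := hf
    exact ⟨⟨h1, by omega⟩, ih (by omega) h3⟩

lemma mem_lukJ {c : ℕ} {x : ℤ} : x ∈ lukJ c ↔ x = 1 ∨ (-(c : ℤ) ≤ x ∧ x ≤ -1) := by
  simp [lukJ]

lemma le_one_of_mem {c : ℕ} {x : ℤ} (hx : x ∈ lukJ c) : x ≤ 1 := by
  rcases mem_lukJ.1 hx with h | h <;> omega

lemma neg_not_mem {c : ℕ} {k : ℤ} (hk : (c : ℤ) < k) : -k ∉ lukJ c := by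
  simp only [mem_lukJ]; omega

lemma sum_le_length (l : List ℤ) (h : ∀ x ∈ l, x ≤ 1) : l.sum ≤ l.length := by
  induction l with
  | nil => simp
  | cons s r ih =>
    simp only [List.sum_cons, List.length_cons]
    have := h s (by simp)
    have := ih (fun x hx => h x (by simp [hx]))
    push_cast
    omega

lemma exists_decomp {c : ℕ} : ∀ (l : List ℤ) (h : ℤ), FreeFrom (lukJ c) h l → 0 ≤ h →
    (c : ℤ) + 1 ≤ h + l.sum →
    ((c : ℤ) + 1 ≤ h ∧ FloorFrom (lukJ c) ((c : ℤ) + 1) h l) ∨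
    (∃ m1 m2, l = m1 ++ 1 :: m2 ∧ FreeFrom (lukJ c) h m1 ∧ h + m1.sum = (c : ℤ) ∧
      FloorFrom (lukJ c) ((c : ℤ) + 1) ((c : ℤ) + 1) m2) := by
  intro l
  induction l with
  | nil =>
    intro h _ _ hsum
    simp only [List.sum_nil, add_zero] at hsum
    exact Or.inl ⟨hsum, trivial⟩
  | cons s r ih =>
    intro h hf h0 hsum
    obtain ⟨⟨hs, hns⟩, hfr⟩ := hf
    simp only [List.sum_cons] at hsum
    rcases ih (h + s) hfr hns (by omega) with ⟨hge, hfl⟩ | ⟨m1, m2, rfl, hm1, hs1, hm2⟩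
    · by_cases hh : (c : ℤ) + 1 ≤ h
      · exact Or.inl ⟨hh, ⟨hs, hge⟩, hfl⟩
      · have h1 : s = 1 ∧ h = (c : ℤ) := by
          have := le_one_of_mem hs; omega
        obtain ⟨rfl, rfl⟩ := h1
        exact Or.inr ⟨[], r, rfl, trivial, by simp, hfl⟩
    · exact Or.inr ⟨s :: m1, m2, rfl, ⟨⟨hs, hns⟩, hm1⟩, by simp at hs1 ⊢; omega, hm2⟩

lemma not_length_lt {c : ℕ} {m1 m2 m1' m2' : List ℤ}
    (he : m1 ++ 1 :: m2 = m1' ++ 1 :: m2')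
    (h1 : m1.sum = (c : ℤ)) (h1' : m1'.sum = (c : ℤ))
    (h2 : FloorFrom (lukJ c) ((c : ℤ) + 1) ((c : ℤ) + 1) m2) :
    ¬ m1.length < m1'.length := by
  intro hlt
  set i := m1'.length with hi
  have htakeR : ((m1' ++ 1 :: m2').take i).sum = (c : ℤ) := by
    rw [List.take_left]; exact h1'
  have hd : i = m1.length + (1 + (i - m1.length - 1)) := by omega
  have htakeL : ((m1 ++ 1 :: m2).take i).sum
      = m1.sum + 1 + (m2.take (i - m1.length - 1)).sum := by
    rw [hd, List.take_append]
    simp [List.take_cons]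
    rw [List.take_of_length_le (by omega)]
    ring
  have hnn : (0 : ℤ) ≤ (m2.take (i - m1.length - 1)).sum := by
    have := floor_take (le_refl ((c : ℤ) + 1)) h2 (i - m1.length - 1)
    omega
  rw [he] at htakeL
  rw [htakeR] at htakeL
  omega

lemma decomp_unique {c : ℕ} {m1 m2 m1' m2' : List ℤ}
    (he : m1 ++ 1 :: m2 = m1' ++ 1 :: m2')
    (h1 : m1.sum = (c : ℤ)) (h1' : m1'.sum = (c : ℤ))
    (h2 : FloorFrom (lukJ c) ((c : ℤ) + 1) ((c : ℤ) + 1) m2)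
    (h2' : FloorFrom (lukJ c) ((c : ℤ) + 1) ((c : ℤ) + 1) m2') :
    m1 = m1' ∧ m2 = m2' := by
  have hlen : m1.length = m1'.length := by
    have a1 := not_length_lt he h1 h1' h2
    have a2 := not_length_lt he.symm h1' h1 h2'
    omega
  obtain ⟨e1, e2⟩ := List.append_inj he hlen
  exact ⟨e1, by simpa using e2⟩

lemma floor_of_free {c : ℕ} {m : List ℤ} (h : FreeFrom (lukJ c) 0 m) :
    FloorFrom (lukJ c) ((c : ℤ) + 1) ((c : ℤ) + 1) m :=
  floor_shift.2 (by simpa using h)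

lemma free_of_floor {c : ℕ} {m : List ℤ}
    (h : FloorFrom (lukJ c) ((c : ℤ) + 1) ((c : ℤ) + 1) m) :
    FreeFrom (lukJ c) 0 m := by
  simpa using floor_shift.1 h

lemma finite_free (c n : ℕ) (k : ℤ) :
    Finite {l : List ℤ // l.length = n ∧ FreeFrom (lukJ c) 0 l ∧ l.sum = k} := by
  let f : {l : List ℤ // l.length = n ∧ FreeFrom (lukJ c) 0 l ∧ l.sum = k} →
      List.Vector ↥(lukJ c) n := fun l =>
    ⟨l.1.pmap (fun x hx => ⟨x, hx⟩) (mem_of_free l.2.2.1), by simp [l.2.1]⟩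
  have hf : Function.Injective f := by
    intro a b hab
    have h2 : (f a).1.map Subtype.val = (f b).1.map Subtype.val := by rw [hab]
    simpa [f, List.map_pmap, Subtype.ext_iff] using h2
  exact Finite.of_injective f hf


end QAux

/-- **Decomposition of excursions ending with a single catastrophe for the
jump set `{-c, …, -1, +1}`.** `q n k = 0` unless `k ≥ c + 1` and `n ≥ 2`, and
for every `j ≥ 0` and `n ≥ 2`,
`q n (c+1+j) = ∑_{a+b=n-2} M^{(c)}_a · M_{b,j}`. -/
theorem qCountSize_decomposition (c : ℕ) (hc : 1 ≤ c) :
    (∀ n k : ℕ, (k < c + 1 ∨ n < 2) → qCountSize c n k = 0) ∧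
    (∀ j n : ℕ, 2 ≤ n →
      qCountSize c n (c + 1 + j) =
        ∑ p ∈ Finset.HasAntidiagonal.antidiagonal (n - 2),
          freeMCount c p.1 (c : ℤ) * freeMCount c p.2 (j : ℤ)) := by
  constructor
  · intro n k hk
    rw [qCountSize, Nat.card_eq_zero]
    left
    constructor
    rintro ⟨l, hlen, hvalid, hsum0, l', rfl, hpos, hnot, hcat, hsumk⟩
    have hv' : CatValidFrom (lukJ c) 0 l' := (cat_append.1 hvalid).1
    have hfree : FreeFrom (lukJ c) 0 l' := free_iff.2 ⟨hv', hcat⟩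
    have hsl : l'.sum ≤ l'.length :=
      sum_le_length l' (fun x hx => le_one_of_mem (mem_of_free hfree x hx))
    have hk1 : (c : ℤ) < (k : ℤ) := by
      by_contra hcon
      exact hnot (by rw [hsumk]; rw [mem_lukJ]; right; omega)
    have hlen' : l'.length + 1 = n := by
      simpa using hlen
    have hkl : (k : ℤ) ≤ (l'.length : ℤ) := hsumk ▸ hsl
    omega
  · intro j n hn
    classical
    letI fA : ∀ (a : ℕ) (k : ℤ),
        Fintype {l : List ℤ // l.length = a ∧ FreeFrom (lukJ c) 0 l ∧ l.sum = k} :=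
      fun a k => @Fintype.ofFinite _ (finite_free c a k)
    set S := {l : List ℤ // l.length = n - 1 ∧ FreeFrom (lukJ c) 0 l ∧
      l.sum = (c : ℤ) + 1 + (j : ℤ)} with hSdef
    set Qt := {l : List ℤ //
      l.length = n ∧ CatValidFrom (lukJ c) 0 l ∧ l.sum = 0 ∧
        ∃ l' : List ℤ, l = l' ++ [-l'.sum] ∧ 0 < l'.sum ∧ -l'.sum ∉ lukJ c ∧
          catNum (lukJ c) 0 l' = 0 ∧ l'.sum = ((c + 1 + j : ℕ) : ℤ)} with hQdef
    have hKpos : (0 : ℤ) < (c : ℤ) + 1 + (j : ℤ) := by positivity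
    have hKnot : -((c : ℤ) + 1 + (j : ℤ)) ∉ lukJ c := neg_not_mem (by omega)
    -- equiv 1 : S ≃ Qt
    let f : S → Qt := fun l => ⟨l.1 ++ [-(l.1.sum)], by
      obtain ⟨hl, hfr, hs⟩ := l.2
      refine ⟨by simp [hl]; omega, ?_, by simp, l.1, rfl, by rw [hs]; exact hKpos,
        by rw [hs]; exact hKnot, (free_iff.1 hfr).2, by rw [hs]; push_cast; ring⟩
      refine cat_append.2 ⟨(free_iff.1 hfr).1, ?_⟩
      exact ⟨Or.inr ⟨by simp, by simpa [hs] using hKpos, by simpa [hs] using hKnot⟩, trivial⟩⟩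
    have hfbij : Function.Bijective f := by
      constructor
      · rintro ⟨l1, hl1⟩ ⟨l2, hl2⟩ heq
        have heq2 : l1 ++ [-l1.sum] = l2 ++ [-l2.sum] := congrArg Subtype.val heq
        exact Subtype.ext (List.append_inj heq2 (hl1.1.trans hl2.1.symm)).1
      · rintro ⟨l, hlen, hvalid, hsum0, l', heq, hpos, hnot, hcat, hsumk⟩
        have hv' : CatValidFrom (lukJ c) 0 l' := by
          rw [heq] at hvalid; exact (cat_append.1 hvalid).1
        have hfree : FreeFrom (lukJ c) 0 l' := free_iff.2 ⟨hv', hcat⟩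
        have hsum' : l'.sum = (c : ℤ) + 1 + (j : ℤ) := by rw [hsumk]; push_cast; ring
        have hlen' : l'.length = n - 1 := by
          rw [heq] at hlen; simp at hlen; omega
        exact ⟨⟨l', hlen', hfree, hsum'⟩, Subtype.ext (by simp [f, heq])⟩
    -- equiv 2 : sigma ≃ S
    let A : ℕ × ℕ → Type := fun p =>
      {l : List ℤ // l.length = p.1 ∧ FreeFrom (lukJ c) 0 l ∧ l.sum = (c : ℤ)}
    let B : ℕ × ℕ → Type := fun p =>
      {l : List ℤ // l.length = p.2 ∧ FreeFrom (lukJ c) 0 l ∧ l.sum = (j : ℤ)}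
    have gprop : ∀ (p : ℕ × ℕ), p ∈ Finset.HasAntidiagonal.antidiagonal (n - 2) → ∀ (m1 m2 : List ℤ),
        m1.length = p.1 → FreeFrom (lukJ c) 0 m1 → m1.sum = (c : ℤ) →
        m2.length = p.2 → FreeFrom (lukJ c) 0 m2 → m2.sum = (j : ℤ) →
        ((m1 ++ 1 :: m2).length = n - 1 ∧ FreeFrom (lukJ c) 0 (m1 ++ 1 :: m2) ∧
          (m1 ++ 1 :: m2).sum = (c : ℤ) + 1 + (j : ℤ)) := by
      intro p hp m1 m2 hl1 hf1 hs1 hl2 hf2 hs2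
      rw [Finset.HasAntidiagonal.mem_antidiagonal] at hp
      refine ⟨by simp; omega, ?_, by simp [hs1, hs2]; ring⟩
      refine free_append.2 ⟨hf1, ?_⟩
      rw [zero_add, hs1]
      exact ⟨⟨by simp [mem_lukJ], by omega⟩, free_mono (by omega) hf2⟩
    let g : (Σ p : ↥(Finset.HasAntidiagonal.antidiagonal (n - 2)), A p.1 × B p.1) → S := fun x =>
      ⟨x.2.1.1 ++ 1 :: x.2.2.1, gprop x.1.1 x.1.2 x.2.1.1 x.2.2.1 x.2.1.2.1
        x.2.1.2.2.1 x.2.1.2.2.2 x.2.2.2.1 x.2.2.2.2.1 x.2.2.2.2.2⟩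
    have hgbij : Function.Bijective g := by
      constructor
      · rintro ⟨⟨⟨a, b⟩, hp⟩, ⟨m1, hl1, hf1, hs1⟩, ⟨m2, hl2, hf2, hs2⟩⟩
               ⟨⟨⟨a', b'⟩, hp'⟩, ⟨m1', hl1', hf1', hs1'⟩, ⟨m2', hl2', hf2', hs2'⟩⟩ heq
        have heq2 : m1 ++ 1 :: m2 = m1' ++ 1 :: m2' := congrArg Subtype.val heq
        obtain ⟨e1, e2⟩ := decomp_unique heq2 hs1 hs1' (floor_of_free hf2) (floor_of_free hf2')
        subst e1; subst e2
        change m1.length = a at hl1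
        change m2.length = b at hl2
        change m1.length = a' at hl1'
        change m2.length = b' at hl2'
        have ha : a = a' := by omega
        have hb : b = b' := by omega
        subst ha; subst hb
        rfl
      · rintro ⟨l, hlen, hfree, hsum⟩
        rcases exists_decomp l 0 hfree le_rfl (by omega) with ⟨habs, -⟩ | ⟨m1, m2, heq, hm1, hs1, hm2⟩
        · omega
        · rw [zero_add] at hs1
          have hsum2 : m2.sum = (j : ℤ) := by
            rw [heq] at hsum; simp at hsum; omega
          have hlens : m1.length + m2.length = n - 2 := by
            rw [heq] at hlen; simp at hlen; omega
          refine ⟨⟨⟨(m1.length, m2.length), Finset.HasAntidiagonal.mem_antidiagonal.2 hlens⟩,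
            ⟨m1, rfl, hm1, hs1⟩, ⟨m2, rfl, free_of_floor hm2, hsum2⟩⟩, ?_⟩
          exact Subtype.ext heq.symm
    -- cardinality computation
    have step1 : qCountSize c n (c + 1 + j) = Nat.card S := by
      rw [qCountSize]
      exact (Nat.card_congr (Equiv.ofBijective f hfbij)).symm
    rw [step1, ← Nat.card_congr (Equiv.ofBijective g hgbij)]
    rw [Nat.card_eq_fintype_card, Fintype.card_sigma]
    rw [← Finset.sum_coe_sort (Finset.HasAntidiagonal.antidiagonal (n - 2))
      (fun p => freeMCount c p.1 (c : ℤ) * freeMCount c p.2 (j : ℤ))]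
    congr 1
    funext p
    rw [← Nat.card_eq_fintype_card, Nat.card_prod]
    rfl
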